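/- Let k ≥ 2 be an integer and let π be the PageRank vector of Γ(k) for α = 1 − 1/k. Then for every i with 1 ≤ i ≤ k, π_{Bi} < ((1 − 1/k)/3)^i · π_{C2} + 3/(2k(k+3)). -/
import Mathlib


/-- Arc relation of the graph `Γ(k)` on vertex indices `0, ..., k+2`, where
vertex `0` is `C1`, vertex `1` is `C2`, vertex `i+1` is `B_i` for `1 ≤ i ≤ k`,
and vertex `k+2` is `A`.  `PRadj k j i` holds iff there is an arc from `j` to `i`. -/
def PRadj (k j i : ℕ) : Prop :=
  (j = 0 ∧ (i = 0 ∨ i = 1)) ∨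
  (j = 1 ∧ (i = 0 ∨ i = 1 ∨ i = 2)) ∨
  (2 ≤ j ∧ j ≤ k + 1 ∧ (i = 0 ∨ i = 1 ∨ i = j + 1)) ∨
  (j = k + 2 ∧ i = k + 2)

instance (k j i : ℕ) : Decidable (PRadj k j i) := by unfold PRadj; infer_instance

/-- Out-degree of vertex `j` in `Γ(k)`:  `deg(C1) = 2`, `deg(A) = 1`, all others `3`. -/
def PRdeg (k j : ℕ) : ℕ := if j = 0 then 2 else if j = k + 2 then 1 else 3

/-- The PageRank matrix `R_α` of `Γ(k)`:  entry `(i, j)` is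
`α / deg(j) + (1 - α)/(k+3)` if there is an arc from `j` to `i`, and `(1 - α)/(k+3)`
otherwise. -/
noncomputable def PRmat (k : ℕ) (α : ℝ) : Matrix (Fin (k + 3)) (Fin (k + 3)) ℝ :=
  fun i j =>
    if PRadj k j.1 i.1 then α / (PRdeg k j.1 : ℝ) + (1 - α) / ((k : ℝ) + 3)
    else (1 - α) / ((k : ℝ) + 3)

/-- `π` is a PageRank vector of `Γ(k)` for jumping parameter `α`:  it has nonnegative
entries summing to `1` and satisfies `R_α π = π`. -/
def IsPageRank (k : ℕ) (α : ℝ) (π : Fin (k + 3) → ℝ) : Prop :=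
  (∀ v, 0 ≤ π v) ∧ (∑ v, π v = 1) ∧ (PRmat k α).mulVec π = π


/-- For `k ≥ 2` and `α = 1 - 1/k`, the PageRank vector satisfies
`π_{Bi} < ((1 - 1/k)/3)^i · π_{C2} + 3/(2k(k+3))` for all `1 ≤ i ≤ k`. -/
theorem pagerank_Bi_upper_bound (k : ℕ) (hk : 2 ≤ k) (π : Fin (k + 3) → ℝ)
    (hπ : IsPageRank k (1 - 1 / (k : ℝ)) π) :
    ∀ i : ℕ, ∀ _hi1 : 1 ≤ i, ∀ _hik : i ≤ k,
      π ⟨i + 1, by omega⟩ <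
        ((1 - 1 / (k : ℝ)) / 3) ^ i * π ⟨1, by omega⟩
          + 3 / (2 * (k : ℝ) * ((k : ℝ) + 3)) := by
  obtain ⟨hpos, hsum1, hmv⟩ := hπ
  set α : ℝ := 1 - 1 / (k : ℝ) with hα
  have hk2 : (2:ℝ) ≤ (k:ℝ) := by exact_mod_cast hk
  have hk0 : (0:ℝ) < (k:ℝ) := by linarith
  have hk3 : (0:ℝ) < (k:ℝ) + 3 := by linarith
  have hαhalf : (1:ℝ)/2 ≤ α := by
    rw [hα]
    have : 1/(k:ℝ) ≤ 1/2 := by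
      rw [div_le_div_iff₀ hk0 (by norm_num)]; linarith
    linarith
  have hα3pos : (0:ℝ) < α/3 := by linarith
  have key : ∀ i : ℕ, ∀ h1 : 1 ≤ i, ∀ h2 : i ≤ k,
      π ⟨i+1, by omega⟩ = α/3 * π ⟨i, by omega⟩ + (1-α)/((k:ℝ)+3) := by
    intro i h1 h2
    have h := congrFun hmv ⟨i+1, by omega⟩
    rw [Matrix.mulVec, dotProduct] at h
    rw [← h]
    have hPt : ∀ j : Fin (k+3),
        PRmat k α ⟨i+1, by omega⟩ j * π j
          = (1-α)/((k:ℝ)+3) * π j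
            + (if j = (⟨i, by omega⟩ : Fin (k+3)) then α/3 * π j else 0) := by
      intro j
      by_cases hj : j = (⟨i, by omega⟩ : Fin (k+3))
      · subst hj
        have hadj : PRadj k i (i+1) := by unfold PRadj; omega
        have hdeg : PRdeg k i = 3 := by
          unfold PRdeg
          rw [if_neg (by omega), if_neg (by omega)]
        simp only [PRmat, hadj, if_true, hdeg, if_pos rfl]
        push_cast
        ring
      · have hne : j.1 ≠ i := fun hh => hj (Fin.ext hh)
        have hadj : ¬ PRadj k j.1 (i+1) := by unfold PRadj; omega
        simp [PRmat, hadj, hj]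
    rw [Finset.sum_congr rfl (fun j _ => hPt j)]
    rw [Finset.sum_add_distrib, ← Finset.mul_sum, hsum1, mul_one]
    rw [Finset.sum_ite_eq' Finset.univ]
    simp only [Finset.mem_univ, if_true]
    ring
  have hcd : α/3 * (3/(2*(k:ℝ)*((k:ℝ)+3))) + (1-α)/((k:ℝ)+3)
      ≤ 3/(2*(k:ℝ)*((k:ℝ)+3)) := by
    rw [hα]
    have e : (1 - 1/(k:ℝ))/3 * (3/(2*(k:ℝ)*((k:ℝ)+3))) + (1-(1-1/(k:ℝ)))/((k:ℝ)+3)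
        = (3 - 1/(k:ℝ))/(2*(k:ℝ)*((k:ℝ)+3)) := by
      field_simp
      ring
    rw [e]
    have h1k : (0:ℝ) < 1/(k:ℝ) := by positivity
    gcongr
    linarith
  have hd : (1-α)/((k:ℝ)+3) < 3/(2*(k:ℝ)*((k:ℝ)+3)) := by
    rw [hα, div_lt_div_iff₀ (by positivity) (by positivity)]
    have e2 : (1-(1-1/(k:ℝ)))*(2*(k:ℝ)*((k:ℝ)+3)) = 2*((k:ℝ)+3) := by
      field_simp
      ring
    rw [e2]
    linarith
  intro i hi1
  induction i, hi1 using Nat.le_induction with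
  | base =>
    intro hik
    have e := key 1 le_rfl (by omega)
    rw [pow_one]
    linarith [e, hd]
  | succ n hn1 ih =>
    intro hik
    have hnk : n ≤ k := by omega
    have IH := ih hnk
    have e := key (n+1) (by omega) hik
    have hmul := mul_lt_mul_of_pos_left IH hα3pos
    rw [pow_succ']
    nlinarith [e, hmul]
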